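/- Two countable equivalence structures, each having infinitely many infinite equivalence classes, are isomorphic if and only if for every finite n they have the same number of equivalence classes of size n. -/

import Mathlib

open Set

namespace EqIsoAux

variable (s : Setoid ℕ)

/-- The fiber of the quotient map over `q`, as a set of naturals. -/
def fib (q : Quotient s) : Set ℕ := {b | Quotient.mk s b = q}

lemma mem_fib_mk (a : ℕ) : a ∈ fib s (Quotient.mk s a) := rfl

lemma fib_mk (a : ℕ) : fib s (Quotient.mk s a) = {b | s.r a b} := by
  ext b
  simp only [fib, mem_setOf_eq]
  exact ⟨fun h => s.symm (Quotient.exact h), fun h => Quotient.sound (s.symm h)⟩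

lemma fib_nonempty (q : Quotient s) : (fib s q).Nonempty := by
  induction q using Quotient.ind with
  | _ a => exact ⟨a, mem_fib_mk s a⟩

lemma fib_injective : Function.Injective (fib s) := by
  intro q q' h
  induction q using Quotient.ind with
  | _ a => exact (h ▸ mem_fib_mk s a : a ∈ fib s q')

/-- The classes satisfying a property `P` correspond to the quotient elements whose
fiber satisfies `P`. -/
noncomputable def fibEquiv (P : Set ℕ → Prop) :
    {q : Quotient s // P (fib s q)} ≃ {S : Set ℕ // (∃ a, S = {b | s.r a b}) ∧ P S} := by
  refine Equiv.ofBijective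
    (fun q => ⟨fib s q.1, ?_, q.2⟩) ⟨?_, ?_⟩
  · obtain ⟨a, ha⟩ := Quotient.exists_rep q.1
    exact ⟨a, by rw [← ha, fib_mk]⟩
  · intro q q' h
    exact Subtype.ext (fib_injective s (congrArg Subtype.val h))
  · rintro ⟨S, ⟨a, rfl⟩, hP⟩
    exact ⟨⟨Quotient.mk s a, by rwa [fib_mk]⟩, Subtype.ext (fib_mk s a)⟩

/-- Nonempty sets of naturals with the same `ncard` are equinumerous. -/
lemma mk_eq_of_ncard {S T : Set ℕ} (hS : S.Nonempty) (hT : T.Nonempty)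
    (h : S.ncard = T.ncard) : Cardinal.mk S = Cardinal.mk T := by
  by_cases hSf : S.Finite
  · have hpos : 0 < S.ncard := (Set.ncard_pos hSf).mpr hS
    have hTf : T.Finite := by
      by_contra hTi
      rw [Set.Infinite.ncard hTi] at h
      omega
    have : Nat.card S = Nat.card T := by
      rwa [Nat.card_coe_set_eq, Nat.card_coe_set_eq]
    have fs : Finite S := hSf.to_subtype
    have ft : Finite T := hTf.to_subtype
    rw [← Nat.cast_card (α := S), ← Nat.cast_card (α := T), this]
  · have hSi : S.Infinite := hSf
    have hTi : T.Infinite := by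
      intro hTf
      have hpos : 0 < T.ncard := (Set.ncard_pos hTf).mpr hT
      rw [Set.Infinite.ncard hSi] at h
      omega
    have := hSi.to_subtype
    have := hTi.to_subtype
    rw [Cardinal.mk_eq_aleph0 S, Cardinal.mk_eq_aleph0 T]

lemma ncard_fib_eq_zero_iff (q : Quotient s) :
    (fib s q).ncard = 0 ↔ (fib s q).Infinite := by
  constructor
  · intro h
    by_contra hfin
    have hfin' : (fib s q).Finite := not_infinite.mp hfin
    exact absurd ((Set.ncard_pos hfin').mpr (fib_nonempty s q)) (by omega)
  · exact Set.Infinite.ncard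

end EqIsoAux

open EqIsoAux in
/-- Two countable equivalence structures, each with infinitely many infinite classes, are
isomorphic iff for each finite `n ≥ 1` they have the same number (as a cardinal) of
classes of size exactly `n`. -/
theorem equivalence_structures_iso_iff (E E' : ℕ → ℕ → Prop)
    (hE : Equivalence E) (hE' : Equivalence E')
    (hInfE : {s : Set ℕ | (∃ a, s = {b | E a b}) ∧ s.Infinite}.Infinite)
    (hInfE' : {s : Set ℕ | (∃ a, s = {b | E' a b}) ∧ s.Infinite}.Infinite) :
    (∃ f : ℕ ≃ ℕ, ∀ a b, E a b ↔ E' (f a) (f b)) ↔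
    (∀ n : ℕ, 1 ≤ n →
      Cardinal.mk {s : Set ℕ | (∃ a, s = {b | E a b}) ∧ s.Finite ∧ s.ncard = n} =
      Cardinal.mk {s : Set ℕ | (∃ a, s = {b | E' a b}) ∧ s.Finite ∧ s.ncard = n}) := by
  constructor
  · -- Forward direction: an isomorphism induces a size-preserving bijection on classes.
    rintro ⟨f, hf⟩ n hn
    refine Cardinal.mk_congr (Equiv.ofBijective (fun S => ⟨f '' S.1, ?_⟩) ⟨?_, ?_⟩)
    · obtain ⟨⟨a, ha⟩, hfin, hcard⟩ := S.2
      refine ⟨⟨f a, ?_⟩, hfin.image f, by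
        rw [Set.ncard_image_of_injective _ f.injective]; exact hcard⟩
      ext b
      rw [ha]
      constructor
      · rintro ⟨c, hc, rfl⟩
        exact (hf a c).mp hc
      · intro hb
        refine ⟨f.symm b, ?_, f.apply_symm_apply b⟩
        have := (hf a (f.symm b))
        rw [f.apply_symm_apply] at this
        exact this.mpr hb
    · intro S T h
      have := congrArg Subtype.val h
      exact Subtype.ext ((Set.image_injective.mpr f.injective) this)
    · rintro ⟨T, ⟨a', rfl⟩, hfin, hcard⟩
      refine ⟨⟨f.symm '' {b | E' a' b}, ⟨f.symm a', ?_⟩, hfin.image _, by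
        rw [Set.ncard_image_of_injective _ f.symm.injective]; exact hcard⟩, ?_⟩
      · ext b
        constructor
        · rintro ⟨c, hc, rfl⟩
          have := (hf (f.symm a') (f.symm c))
          rw [f.apply_symm_apply, f.apply_symm_apply] at this
          exact this.mpr hc
        · intro hb
          refine ⟨f b, ?_, f.symm_apply_apply b⟩
          have := (hf (f.symm a') b)
          rw [f.apply_symm_apply] at this
          exact this.mp hb
      · apply Subtype.ext
        show f '' (f.symm '' {b | E' a' b}) = {b | E' a' b}
        rw [Set.image_image]
        simp [f.apply_symm_apply]
  · -- Backward direction: build the isomorphism by back-and-forth on classes.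
    intro h
    set sE : Setoid ℕ := ⟨E, hE⟩ with hsE
    set sE' : Setoid ℕ := ⟨E', hE'⟩ with hsE'
    -- size function on quotients
    set σ : Quotient sE → ℕ := fun q => (fib sE q).ncard with hσdef
    set σ' : Quotient sE' → ℕ := fun q => (fib sE' q).ncard with hσ'def
    -- equal cardinality of fibers of σ and σ'
    have hfib : ∀ n : ℕ, Cardinal.mk {q // σ q = n} = Cardinal.mk {q // σ' q = n} := by
      intro n
      rcases Nat.eq_zero_or_pos n with rfl | hn
      · -- infinite classes: both collections are countably infinite
        have e1 : {q : Quotient sE // σ q = 0} ≃ {q : Quotient sE // (fib sE q).Infinite} :=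
          Equiv.subtypeEquivRight (fun q => ncard_fib_eq_zero_iff sE q)
        have e2 : {q : Quotient sE' // σ' q = 0} ≃ {q : Quotient sE' // (fib sE' q).Infinite} :=
          Equiv.subtypeEquivRight (fun q => ncard_fib_eq_zero_iff sE' q)
        have e3 := fibEquiv sE (fun S => S.Infinite)
        have e4 := fibEquiv sE' (fun S => S.Infinite)
        have hcq : Countable (Quotient sE) := Quotient.countable
        have hcq' : Countable (Quotient sE') := Quotient.countable
        have hi1 : Infinite {S : Set ℕ // (∃ a, S = {b | sE.r a b}) ∧ S.Infinite} :=
          hInfE.to_subtype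
        have hi2 : Infinite {S : Set ℕ // (∃ a, S = {b | sE'.r a b}) ∧ S.Infinite} :=
          hInfE'.to_subtype
        have hi3 : Infinite {q : Quotient sE // (fib sE q).Infinite} := e3.infinite_iff.mpr hi1
        have hi4 : Infinite {q : Quotient sE' // (fib sE' q).Infinite} := e4.infinite_iff.mpr hi2
        have hi5 : Infinite {q : Quotient sE // σ q = 0} := e1.infinite_iff.mpr hi3
        have hi6 : Infinite {q : Quotient sE' // σ' q = 0} := e2.infinite_iff.mpr hi4
        rw [Cardinal.mk_eq_aleph0 _, Cardinal.mk_eq_aleph0 _]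
      · -- finite classes of size n: use the hypothesis
        have key : ∀ q : Quotient sE, σ q = n ↔ ((fib sE q).Finite ∧ (fib sE q).ncard = n) := by
          intro q
          constructor
          · intro hq
            have hfin : (fib sE q).Finite := by
              by_contra hinf
              have := Set.Infinite.ncard (hinf : (fib sE q).Infinite)
              simp only [hσdef] at hq
              omega
            exact ⟨hfin, hq⟩
          · exact fun hq => hq.2
        have key' : ∀ q : Quotient sE', σ' q = n ↔ ((fib sE' q).Finite ∧ (fib sE' q).ncard = n) := by
          intro q
          constructor
          · intro hq
            have hfin : (fib sE' q).Finite := by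
              by_contra hinf
              have := Set.Infinite.ncard (hinf : (fib sE' q).Infinite)
              simp only [hσ'def] at hq
              omega
            exact ⟨hfin, hq⟩
          · exact fun hq => hq.2
        have e1 := (Equiv.subtypeEquivRight key).trans
          (fibEquiv sE (fun S => S.Finite ∧ S.ncard = n))
        have e2 := (Equiv.subtypeEquivRight key').trans
          (fibEquiv sE' (fun S => S.Finite ∧ S.ncard = n))
        rw [Cardinal.mk_congr e1, Cardinal.mk_congr e2]
        exact h n hn
    -- bijection of quotients preserving size
    have efibs : ∀ n : ℕ, {q // σ q = n} ≃ {q // σ' q = n} :=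
      fun n => Classical.choice (Cardinal.eq.mp (hfib n))
    set Φ : Quotient sE ≃ Quotient sE' := Equiv.ofFiberEquiv efibs with hΦ
    have hΦσ : ∀ q, σ' (Φ q) = σ q := Equiv.ofFiberEquiv_map efibs
    -- bijections between matched fibers
    have efib : ∀ q : Quotient sE,
        {b : ℕ // Quotient.mk sE b = q} ≃ {b : ℕ // Quotient.mk sE' b = Φ q} := by
      intro q
      have h1 : Cardinal.mk (fib sE q) = Cardinal.mk (fib sE' (Φ q)) :=
        mk_eq_of_ncard (fib_nonempty sE q) (fib_nonempty sE' (Φ q)) (hΦσ q).symm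
      exact Classical.choice (Cardinal.eq.mp h1)
    set f : ℕ ≃ ℕ := (Equiv.sigmaFiberEquiv (Quotient.mk sE)).symm.trans
      ((Equiv.sigmaCongr Φ efib).trans (Equiv.sigmaFiberEquiv (Quotient.mk sE'))) with hfdef
    have hfq : ∀ a : ℕ, Quotient.mk sE' (f a) = Φ (Quotient.mk sE a) := by
      intro a
      have : f a = (efib (Quotient.mk sE a) ⟨a, rfl⟩).1 := rfl
      rw [this]
      exact (efib (Quotient.mk sE a) ⟨a, rfl⟩).2
    refine ⟨f, fun a b => ?_⟩
    have h1 : E a b ↔ Quotient.mk sE a = Quotient.mk sE b :=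
      ⟨fun hab => Quotient.sound hab, fun hab => Quotient.exact hab⟩
    have h2 : E' (f a) (f b) ↔ Quotient.mk sE' (f a) = Quotient.mk sE' (f b) :=
      ⟨fun hab => Quotient.sound hab, fun hab => Quotient.exact hab⟩
    rw [h1, h2, hfq a, hfq b]
    exact ⟨fun hh => congrArg Φ hh, fun hh => Φ.injective hh⟩
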